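/- arXiv:2203.14937 — 7 statements merged into one kernel-verified Lean document; each statement's English description precedes it below -/
import Mathlib

section
/- Let m ≥ 1 and h ≥ 1 be natural numbers and let A be an m×m complex matrix that is NOT diagonalizable (there is no invertible m×m complex matrix P with P⁻¹·A·P diagonal). Then the block matrix M(A,h) is not diagonalizable: there is no invertible (hm)×(hm) complex matrix Q such that Q⁻¹·M(A,h)·Q is diagonal. -/
open Matrix

/-- The block matrix `M(A,h)` with `A` in the top-right block, identity blocks
on the first block subdiagonal, and zero blocks elsewhere. -/
def liftBlock {m : ℕ} (h : ℕ) (A : Matrix (Fin m) (Fin m) ℂ) :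
    Matrix (Fin h × Fin m) (Fin h × Fin m) ℂ :=
  fun p q =>
    if p.1.val = 0 ∧ q.1.val = h - 1 then A p.2 q.2
    else if p.1.val = q.1.val + 1 then (if p.2 = q.2 then 1 else 0)
    else 0

theorem liftBlock_not_diagonalizable {m h : ℕ} (hm : 1 ≤ m) (hh : 1 ≤ h)
    (A : Matrix (Fin m) (Fin m) ℂ)
    (hA : ¬ ∃ P : Matrix (Fin m) (Fin m) ℂ, IsUnit P ∧ (P⁻¹ * A * P).IsDiag) :
    ¬ ∃ Q : Matrix (Fin h × Fin m) (Fin h × Fin m) ℂ,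
        IsUnit Q ∧ (Q⁻¹ * liftBlock h A * Q).IsDiag := by
  rintro ⟨Q, hQ, hDiag⟩
  apply hA
  classical
  set M := liftBlock h A with hMdef
  set D := Q⁻¹ * M * Q with hDdef
  have hQdet : IsUnit Q.det := (Matrix.isUnit_iff_isUnit_det Q).mp hQ
  have hMQ : M * Q = Q * D := by
    rw [hDdef, ← Matrix.mul_assoc, ← Matrix.mul_assoc, Matrix.mul_nonsing_inv Q hQdet,
      Matrix.one_mul]
  have hcol : ∀ p j, (M * Q) p j = D j j * Q p j := by
    intro p j
    rw [hMQ, Matrix.mul_apply, Finset.sum_eq_single j]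
    · ring
    · intro r _ hr
      rw [hDiag hr, mul_zero]
    · intro hj; exact absurd (Finset.mem_univ j) hj
  set hl : Fin h := ⟨h - 1, by omega⟩ with hhl
  set w : Fin h × Fin m → (Fin m → ℂ) := fun j k => Q (hl, k) j with hwdef
  -- entries of M in a nonzero block row
  have hMent : ∀ (a : ℕ) (ha : a < h), 0 < a → ∀ (k : Fin m) (r : Fin h × Fin m),
      M (⟨a, ha⟩, k) r = if r = (⟨a - 1, by omega⟩, k) then 1 else 0 := by
    intro a ha hi k r
    obtain ⟨i', l⟩ := r
    simp only [hMdef, liftBlock, Prod.mk.injEq, Fin.ext_iff]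
    split_ifs with h1 h2 h3 h3 h2 h3 <;> first
      | rfl
      | (exfalso; omega)
      | (exfalso; simp only [Fin.ext_iff] at h3 ⊢; omega)
      | (exfalso; exact h3 ⟨by omega, by simpa [Fin.ext_iff] using h2.symm⟩)
  have hrow1 : ∀ (a : ℕ) (ha : a < h), 0 < a → ∀ (k : Fin m) (j),
      (M * Q) (⟨a, ha⟩, k) j = Q (⟨a - 1, by omega⟩, k) j := by
    intro a ha hi k j
    rw [Matrix.mul_apply]
    rw [Finset.sum_congr rfl (fun r _ => by rw [hMent a ha hi k r])]
    simp
  -- entries of M in the zero block row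
  have hrow0 : ∀ (k : Fin m) (j), (M * Q) (⟨0, by omega⟩, k) j = ∑ l, A k l * Q (hl, l) j := by
    intro k j
    rw [Matrix.mul_apply, Fintype.sum_prod_type]
    rw [Finset.sum_eq_single hl]
    · apply Finset.sum_congr rfl
      intro l _
      congr 1
      show (if (0:ℕ) = 0 ∧ (hl : Fin h).val = h - 1 then A k l
        else if (0:ℕ) = (hl : Fin h).val + 1 then (if k = l then (1:ℂ) else 0) else 0) = A k l
      rw [if_pos ⟨rfl, rfl⟩]
    · intro i' _ hi'
      apply Finset.sum_eq_zero
      intro l _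
      have : M (⟨0, by omega⟩, k) (i', l) = 0 := by
        simp only [hMdef, liftBlock]
        rw [if_neg, if_neg]
        · omega
        · rintro ⟨-, hc⟩
          exact hi' (Fin.ext hc)
      rw [this, zero_mul]
    · intro hc; exact absurd (Finset.mem_univ hl) hc
  -- descent: components of a column are powers of the eigenvalue times the bottom block
  have hdesc : ∀ j (t : ℕ), t ≤ h - 1 → ∀ k,
      Q (⟨h - 1 - t, by omega⟩, k) j = (D j j) ^ t * Q (hl, k) j := by
    intro j t
    induction t with
    | zero =>
      intro _ k
      simp [hhl]
    | succ t ih =>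
      intro ht k
      have h1 : 0 < h - 1 - t := by omega
      have e1 := hrow1 (h - 1 - t) (by omega) h1 k j
      rw [hcol] at e1
      have hfin : (⟨h - 1 - t - 1, by omega⟩ : Fin h) = ⟨h - 1 - (t + 1), by omega⟩ := by
        simp only [Fin.mk.injEq]; omega
      rw [hfin] at e1
      rw [← e1, ih (by omega) k, pow_succ]
      ring
  -- each w j is an eigenvector of A with eigenvalue (D j j)^h
  have heig : ∀ j, A.mulVec (w j) = ((D j j) ^ h) • w j := by
    intro j
    funext k
    have e0 := hrow0 k j
    rw [hcol] at e0
    have e1 := hdesc j (h - 1) le_rfl k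
    have hfin : (⟨h - 1 - (h - 1), by omega⟩ : Fin h) = ⟨0, by omega⟩ := by
      simp only [Fin.mk.injEq]; omega
    rw [hfin] at e1
    have hpow : (D j j) ^ h = D j j * (D j j) ^ (h - 1) := by
      conv_lhs => rw [show h = (h - 1) + 1 by omega]
      rw [pow_succ]; ring
    calc A.mulVec (w j) k = ∑ l, A k l * Q (hl, l) j := rfl
      _ = D j j * Q (⟨0, by omega⟩, k) j := e0.symm
      _ = D j j * ((D j j) ^ (h - 1) * Q (hl, k) j) := by rw [e1]
      _ = (D j j) ^ h * Q (hl, k) j := by rw [hpow]; ring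
      _ = (((D j j) ^ h) • w j) k := rfl
  -- the w j span ℂ^m
  have hspan : Submodule.span ℂ (Set.range w) = ⊤ := by
    rw [eq_top_iff]
    intro u _
    set c : Fin h × Fin m → ℂ := Q⁻¹.mulVec (fun p => u p.2) with hc
    have hy : Q.mulVec c = fun p => u p.2 := by
      rw [hc, Matrix.mulVec_mulVec, Matrix.mul_nonsing_inv Q hQdet, Matrix.one_mulVec]
    have hu : u = ∑ j, c j • w j := by
      funext k
      have hsum : (∑ j, Q (hl, k) j * c j) = u k := congrFun hy (hl, k)
      calc u k = ∑ j, Q (hl, k) j * c j := hsum.symm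
        _ = ∑ j, (c j • w j) k := Finset.sum_congr rfl (fun j _ => mul_comm _ _)
        _ = (∑ j, c j • w j) k := (Finset.sum_apply _ _ _).symm
    rw [hu]
    exact Submodule.sum_mem _ fun j _ =>
      Submodule.smul_mem _ _ (Submodule.subset_span ⟨j, rfl⟩)
  -- extract a basis of eigenvectors
  obtain ⟨b, hbsub, hbspan, hbli⟩ := exists_linearIndependent ℂ (Set.range w)
  have hbspan' : Submodule.span ℂ b = ⊤ := by rw [hbspan, hspan]
  haveI : Fintype b := (Set.Finite.subset (Set.finite_range w) hbsub).fintype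
  let B : Module.Basis b ℂ (Fin m → ℂ) :=
    Module.Basis.mk hbli (by rw [Subtype.range_coe, hbspan'])
  have hcard : Fintype.card b = m := by
    have h1 := Module.finrank_eq_card_basis B
    rw [Module.finrank_fin_fun] at h1
    omega
  let e : b ≃ Fin m := Fintype.equivFinOfCardEq hcard
  let B' : Module.Basis (Fin m) ℂ (Fin m → ℂ) := B.reindex e
  have hB'mem : ∀ i : Fin m, (B' i : Fin m → ℂ) ∈ b := by
    intro i
    have : B' i = B (e.symm i) := Module.Basis.reindex_apply B e i
    rw [this, Module.Basis.mk_apply]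
    exact (e.symm i).2
  have hev : ∀ i : Fin m, ∃ μ : ℂ, A.mulVec (B' i) = μ • (B' i) := by
    intro i
    obtain ⟨j, hj⟩ := hbsub (hB'mem i)
    exact ⟨(D j j) ^ h, by rw [← hj, heig j]⟩
  choose μ hμ using hev
  let P : Matrix (Fin m) (Fin m) ℂ := (Pi.basisFun ℂ (Fin m)).toMatrix B'
  haveI : Invertible P := (Pi.basisFun ℂ (Fin m)).invertibleToMatrix B'
  have hPunit : IsUnit P := isUnit_of_invertible P
  have hPent : ∀ i j, P i j = B' j i := by
    intro i j
    show (Pi.basisFun ℂ (Fin m)).toMatrix B' i j = B' j i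
    rw [Module.Basis.toMatrix_apply, Pi.basisFun_repr]
  have hAP : A * P = P * Matrix.diagonal μ := by
    ext i j
    rw [Matrix.mul_apply, Matrix.mul_diagonal, hPent i j]
    have := congrFun (hμ j) i
    simp only [Matrix.mulVec, dotProduct, Pi.smul_apply, smul_eq_mul] at this
    calc ∑ r, A i r * P r j = ∑ r, A i r * B' j r := by
          apply Finset.sum_congr rfl
          intro r _
          rw [hPent r j]
      _ = μ j * B' j i := this
      _ = B' j i * μ j := by ring
  refine ⟨P, hPunit, ?_⟩
  rw [Matrix.mul_assoc, hAP, ← Matrix.mul_assoc,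
    Matrix.nonsing_inv_mul P ((Matrix.isUnit_iff_isUnit_det P).mp hPunit), Matrix.one_mul]
  exact Matrix.isDiag_diagonal μ
end

section
/- Let m ≥ 1 and h ≥ 1 be natural numbers and let A be an m×m complex matrix. Then the h-th power of the block matrix M(A,h) is block diagonal with every diagonal block equal to A: for all indices (i,k) and (j,l) in Fin h × Fin m, one has (M(A,h)^h) (i,k) (j,l) = A k l if i = j, and = 0 if i ≠ j. -/
open Matrix

lemma liftBlock_pow_aux {m h : ℕ} (A : Matrix (Fin m) (Fin m) ℂ) :
    ∀ n, n ≤ h → ∀ p q : Fin h × Fin m,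
      (liftBlock h A ^ n) p q =
        if q.1.val + n < h then
          (if p.1.val = q.1.val + n ∧ p.2 = q.2 then 1 else 0)
        else if p.1.val + h = q.1.val + n then A p.2 q.2 else 0 := by
  intro n
  induction n with
  | zero =>
    intro _ p q
    simp only [pow_zero, Matrix.one_apply, Nat.add_zero]
    rw [if_pos q.1.isLt]
    by_cases hpq : p = q
    · subst hpq; simp
    · rw [if_neg hpq, if_neg]
      rintro ⟨h1, h2⟩
      exact hpq (Prod.ext (Fin.ext h1) h2)
  | succ n ih =>
    intro hn p q
    have hn' : n ≤ h := Nat.le_of_succ_le hn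
    rw [pow_succ, Matrix.mul_apply]
    by_cases hq : q.1.val + 1 < h
    · rw [Finset.sum_eq_single (⟨⟨q.1.val + 1, hq⟩, q.2⟩ : Fin h × Fin m)]
      · have hM : liftBlock h A (⟨⟨q.1.val + 1, hq⟩, q.2⟩) q = 1 := by
          unfold liftBlock
          rw [if_neg (by rintro ⟨h1, h2⟩; omega)]
          simp
        rw [hM, mul_one, ih hn']
        have e : q.1.val + 1 + n = q.1.val + (n + 1) := by omega
        simp only [e]
      · intro r _ hr
        have : liftBlock h A r q = 0 := by
          unfold liftBlock
          rw [if_neg (by rintro ⟨h1, h2⟩; omega)]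
          split_ifs with h2 h3
          · exact absurd (show r = (⟨⟨q.1.val + 1, hq⟩, q.2⟩ : Fin h × Fin m) from
              Prod.ext (Fin.ext h2) h3) hr
          · rfl
          · rfl
        rw [this, mul_zero]
      · simp
    · have h0 : 0 < h := Nat.lt_of_le_of_lt (Nat.zero_le _) q.1.isLt
      have hq1 : q.1.val + 1 = h := by have := q.1.isLt; omega
      rw [Finset.sum_eq_single (⟨⟨0, h0⟩, p.2⟩ : Fin h × Fin m)]
      · have hM : liftBlock h A (⟨⟨0, h0⟩, p.2⟩) q = A p.2 q.2 := by
          unfold liftBlock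
          rw [if_pos ⟨rfl, by omega⟩]
        rw [hM, ih hn']
        have e0 : ((⟨0, h0⟩ : Fin h) : ℕ) = 0 := rfl
        rw [e0, if_pos (by omega)]
        by_cases hp : p.1.val = n
        · rw [if_pos ⟨by omega, rfl⟩, one_mul, if_neg (by omega),
            if_pos (by omega)]
        · rw [if_neg (by rintro ⟨h1, _⟩; omega), zero_mul,
            if_neg (by omega), if_neg (by omega)]
      · intro r _ hr
        by_cases hr1 : r.1.val = 0
        · rw [ih hn' p r, if_pos (by omega), if_neg, zero_mul]
          rintro ⟨h1, h2⟩
          exact hr (Prod.ext (Fin.ext (show (r.1 : ℕ) = ((⟨0, h0⟩ : Fin h) : ℕ) from hr1)) h2.symm)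
        · have : liftBlock h A r q = 0 := by
            unfold liftBlock
            rw [if_neg (by rintro ⟨a, _⟩; exact hr1 a),
              if_neg (by intro a; have := r.1.isLt; omega)]
          rw [this, mul_zero]
      · simp

theorem liftBlock_pow_h {m h : ℕ} (hm : 1 ≤ m) (hh : 1 ≤ h)
    (A : Matrix (Fin m) (Fin m) ℂ) :
    ∀ p q : Fin h × Fin m,
      (liftBlock h A ^ h) p q = if p.1 = q.1 then A p.2 q.2 else 0 := by
  intro p q
  rw [liftBlock_pow_aux A h le_rfl p q, if_neg (by omega)]
  by_cases hpq : p.1 = q.1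
  · rw [if_pos (by omega), if_pos hpq]
  · rw [if_neg (by rw [Fin.ext_iff] at hpq; omega), if_neg hpq]
end

section
/- Let m ≥ 1 and h ≥ 1 be natural numbers and let A be an m×m complex matrix. Then the characteristic polynomial of the block matrix M(A,h) equals the composition of the characteristic polynomial of A with X^h: charpoly(M(A,h)) = (charpoly A).comp(X^h). -/
open Matrix Polynomial

def Umat (m h : ℕ) (t : ℂ) : Matrix (Fin h × Fin m) (Fin h × Fin m) ℂ :=
  fun p q => if p.1.val ≤ q.1.val ∧ p.2 = q.2 then t ^ (q.1.val - p.1.val) else 0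

def blockEquiv {h m : ℕ} (i : Fin h) : Fin m ≃ {p : Fin h × Fin m // p.1 = i} where
  toFun := fun k => ⟨(i, k), rfl⟩
  invFun := fun p => p.1.2
  left_inv := fun k => rfl
  right_inv := by rintro ⟨⟨a, b⟩, rfl⟩; rfl

lemma Umat_blockTriangular {m h : ℕ} (t : ℂ) :
    (Umat m h t).BlockTriangular Prod.fst := by
  intro p q hlt
  simp only [Umat]
  rw [if_neg]
  rintro ⟨hle, -⟩
  exact absurd hle (not_le.2 hlt)

lemma Umat_det {m h : ℕ} (t : ℂ) : (Umat m h t).det = 1 := by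
  rw [(Umat_blockTriangular t).det_fintype]
  rw [Finset.prod_eq_one]
  intro i _
  rw [← Matrix.det_submatrix_equiv_self (blockEquiv i), ← Matrix.det_one (n := Fin m)]
  congr 1
  ext k k'
  simp only [Matrix.submatrix_apply, Matrix.toSquareBlock_def, blockEquiv, Equiv.coe_fn_mk,
    Umat, Matrix.one_apply]
  simp [le_refl, eq_comm]

def Cmat {m : ℕ} (h' : ℕ) (A : Matrix (Fin m) (Fin m) ℂ) (t : ℂ) :
    Matrix (Fin (h'+1) × Fin m) (Fin (h'+1) × Fin m) ℂ :=
  fun p q =>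
    if p.1.val = 0 then
      t ^ (q.1.val + 1) * (if p.2 = q.2 then 1 else 0)
        - (if q.1.val = h' then A p.2 q.2 else 0)
    else if q.1.val + 1 = p.1.val ∧ p.2 = q.2 then -1 else 0

lemma liftBlock_mul_Umat {m h' : ℕ} (A : Matrix (Fin m) (Fin m) ℂ) (t : ℂ)
    (i : Fin (h'+1)) (k : Fin m) (j : Fin (h'+1)) (l : Fin m) :
    (liftBlock (h'+1) A * Umat m (h'+1) t) (i, k) (j, l) =
      if i.val = 0 then (if j.val = h' then A k l else 0)
      else if i.val ≤ j.val + 1 ∧ k = l then t ^ (j.val + 1 - i.val) else 0 := by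
  rw [Matrix.mul_apply]
  by_cases hi : i.val = 0
  · rw [if_pos hi]
    rw [Finset.sum_eq_single (Fin.last h', l)]
    · simp only [liftBlock, Umat, hi, Nat.add_sub_cancel, Fin.val_last, true_and]
      have hj2 : j.val < h' + 1 := j.isLt
      simp only [if_true, and_true]
      by_cases hj : j.val = h'
      · rw [if_pos (by omega), if_pos hj, show j.val - h' = 0 by omega, pow_zero, mul_one]
      · rw [if_neg (by omega), if_neg hj, mul_zero]
    · rintro ⟨a, b⟩ - hne
      simp only [liftBlock, Umat, hi, Nat.add_sub_cancel, true_and]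
      by_cases ha : a.val = h'
      · rw [if_pos ha, if_neg, mul_zero]
        rintro ⟨-, hb⟩
        exact hne (by rw [show a = Fin.last h' from Fin.ext ha, hb])
      · rw [if_neg ha, if_neg (by omega), zero_mul]
    · intro habs
      exact absurd (Finset.mem_univ _) habs
  · rw [if_neg hi]
    have hi1 : i.val - 1 < h' + 1 := by omega
    rw [Finset.sum_eq_single ((⟨i.val - 1, hi1⟩ : Fin (h'+1)), k)]
    · simp only [liftBlock, Umat, hi, false_and, if_false]
      rw [if_pos (show i.val = (i.val - 1) + 1 by omega)]
      simp only [if_true, one_mul]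
      by_cases hc : i.val - 1 ≤ j.val ∧ k = l
      · rw [if_pos hc, if_pos ⟨by omega, hc.2⟩]
        congr 1
        omega
      · rw [if_neg hc, if_neg]
        rintro ⟨h1, h2⟩
        exact hc ⟨by omega, h2⟩
    · rintro ⟨a, b⟩ - hne
      simp only [liftBlock, Umat, hi, false_and, if_false]
      by_cases ha : i.val = a.val + 1
      · by_cases hb : k = b
        · refine absurd ?_ hne
          have : a.val = i.val - 1 := by omega
          exact Prod.ext (Fin.ext this) hb.symm
        · rw [if_pos ha, if_neg hb, zero_mul]
      · rw [if_neg ha, zero_mul]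
    · intro habs
      exact absurd (Finset.mem_univ _) habs

lemma NU_eq_Cmat {m h' : ℕ} (A : Matrix (Fin m) (Fin m) ℂ) (t : ℂ) :
    (t • (1 : Matrix (Fin (h'+1) × Fin m) (Fin (h'+1) × Fin m) ℂ) - liftBlock (h'+1) A)
      * Umat m (h'+1) t = Cmat h' A t := by
  rw [sub_mul, Matrix.smul_mul, Matrix.one_mul]
  ext ⟨i, k⟩ ⟨j, l⟩
  rw [Matrix.sub_apply, Matrix.smul_apply, liftBlock_mul_Umat]
  simp only [Umat, Cmat, smul_eq_mul]
  by_cases hi : i.val = 0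
  · rw [if_pos hi, if_pos hi, hi]
    simp only [Nat.zero_le, true_and, Nat.sub_zero]
    by_cases hkl : k = l
    · rw [if_pos hkl, if_pos hkl, mul_one, pow_succ, mul_comm]
    · rw [if_neg hkl, if_neg hkl, mul_zero, mul_zero]
  · rw [if_neg hi, if_neg hi]
    by_cases hkl : k = l
    · by_cases h1 : i.val ≤ j.val
      · rw [if_pos ⟨h1, hkl⟩, if_pos ⟨by omega, hkl⟩, if_neg (by omega)]
        rw [show j.val + 1 - i.val = (j.val - i.val) + 1 by omega, pow_succ]
        ring
      · by_cases h2 : i.val = j.val + 1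
        · rw [if_neg (by omega), if_pos ⟨by omega, hkl⟩, if_pos ⟨by omega, hkl⟩]
          rw [show j.val + 1 - i.val = 0 by omega, pow_zero, mul_zero]
          ring
        · rw [if_neg (by omega), if_neg (by omega), if_neg (by omega)]
          ring
    · rw [if_neg (fun hc => hkl hc.2), if_neg (fun hc => hkl hc.2),
        if_neg (fun hc => hkl hc.2)]
      ring

lemma Cmat_det {m h' : ℕ} (A : Matrix (Fin m) (Fin m) ℂ) (t : ℂ) :
    (Cmat h' A t).det = (t ^ (h'+1) • (1 : Matrix (Fin m) (Fin m) ℂ) - A).det := by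
  set π : Equiv.Perm (Fin (h'+1) × Fin m) :=
    Equiv.prodCongrLeft (fun _ : Fin m => finRotate (h'+1)) with hπdef
  have hπ : ∀ p : Fin (h'+1) × Fin m, π p = (finRotate (h'+1) p.1, p.2) := by
    rintro ⟨a, b⟩; rfl
  have hperm := Matrix.det_permute π (Cmat h' A t)
  -- block triangularity of the transpose of the permuted matrix
  have hDT : (((Cmat h' A t).submatrix π id)ᵀ).BlockTriangular Prod.fst := by
    rintro ⟨a, b⟩ ⟨c, d⟩ hlt
    simp only [Matrix.transpose_apply, Matrix.submatrix_apply, hπ, id_eq, Cmat]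
    have hc : c ≠ Fin.last h' := by
      rintro rfl
      exact absurd (Fin.le_last a) (not_le.2 hlt)
    have hcv : ((finRotate (h'+1)) c).val = c.val + 1 := coe_finRotate_of_ne_last hc
    rw [if_neg (by omega), if_neg]
    rintro ⟨hcond, -⟩
    rw [hcv] at hcond
    have : a = c := Fin.ext (by omega)
    exact absurd hlt (by simp [this])
  have hblock : ∀ i : Fin (h'+1), i ≠ Fin.last h' →
      ((((Cmat h' A t).submatrix π id)ᵀ).toSquareBlock Prod.fst i).det = (-1 : ℂ) ^ m := by
    intro i hi
    rw [← Matrix.det_submatrix_equiv_self (blockEquiv i)]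
    have hcv : ((finRotate (h'+1)) i).val = i.val + 1 := coe_finRotate_of_ne_last hi
    have : ((((Cmat h' A t).submatrix π id)ᵀ).toSquareBlock Prod.fst i).submatrix
        (blockEquiv i) (blockEquiv i) = (-1 : ℂ) • (1 : Matrix (Fin m) (Fin m) ℂ) := by
      ext k k'
      simp only [Matrix.submatrix_apply, Matrix.toSquareBlock_def, Matrix.of_apply,
        blockEquiv, Equiv.coe_fn_mk, Matrix.transpose_apply, hπ, id_eq, Cmat,
        Matrix.smul_apply, Matrix.one_apply, smul_eq_mul]
      rw [hcv, if_neg (by omega)]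
      by_cases hkk : k' = k
      · simp [hkk]
      · simp [hkk, (Ne.symm hkk : ¬ k = k')]
    rw [this, Matrix.det_smul, Matrix.det_one, mul_one, Fintype.card_fin]
  have hlast : ((((Cmat h' A t).submatrix π id)ᵀ).toSquareBlock Prod.fst (Fin.last h')).det
      = (t ^ (h'+1) • (1 : Matrix (Fin m) (Fin m) ℂ) - A).det := by
    rw [← Matrix.det_submatrix_equiv_self (blockEquiv (Fin.last h')),
      ← Matrix.det_transpose (t ^ (h'+1) • (1 : Matrix (Fin m) (Fin m) ℂ) - A)]
    congr 1
    ext k k'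
    simp only [Matrix.submatrix_apply, Matrix.toSquareBlock_def, Matrix.of_apply,
      blockEquiv, Equiv.coe_fn_mk, Matrix.transpose_apply, hπ, id_eq, Cmat, finRotate_last,
      Matrix.sub_apply, Matrix.smul_apply, Matrix.one_apply, smul_eq_mul, Fin.val_last,
      Fin.val_zero, if_true]
  have hdet2 : ((Cmat h' A t).submatrix π id).det
      = (-1 : ℂ) ^ (m * h') * (t ^ (h'+1) • (1 : Matrix (Fin m) (Fin m) ℂ) - A).det := by
    rw [← Matrix.det_transpose, hDT.det_fintype, Fin.prod_univ_castSucc, hlast]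
    congr 1
    rw [Finset.prod_congr rfl (fun i _ => hblock i.castSucc
      (Fin.ne_of_lt (Fin.castSucc_lt_last i)))]
    rw [Finset.prod_const, Finset.card_univ, Fintype.card_fin, ← pow_mul]
  have hsign : ((Equiv.Perm.sign π : ℤ) : ℂ) = (-1 : ℂ) ^ (h' * m) := by
    rw [hπdef, Equiv.Perm.sign_prodCongrLeft]
    push_cast [sign_finRotate]
    rw [Finset.prod_const, Finset.card_univ, Fintype.card_fin, ← pow_mul]
  rw [hdet2, hsign] at hperm
  have hne : ((-1 : ℂ) ^ (m * h')) ≠ 0 := pow_ne_zero _ (by norm_num)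
  have := hperm.symm
  rw [mul_comm h' m] at this
  exact mul_left_cancel₀ hne this

lemma eval_charpoly'' {n : Type*} [DecidableEq n] [Fintype n] (M : Matrix n n ℂ) (t : ℂ) :
    M.charpoly.eval t = (t • (1 : Matrix n n ℂ) - M).det := by
  rw [Matrix.charpoly, ← coe_evalRingHom, RingHom.map_det]
  congr 1
  ext i j
  by_cases hij : i = j
  · subst hij; simp [charmatrix_apply_eq, Matrix.one_apply]
  · simp [charmatrix_apply_ne _ _ _ hij, Matrix.one_apply, hij]

lemma det_lift {m h' : ℕ} (A : Matrix (Fin m) (Fin m) ℂ) (t : ℂ) :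
    (t • (1 : Matrix (Fin (h'+1) × Fin m) (Fin (h'+1) × Fin m) ℂ) - liftBlock (h'+1) A).det
      = (t ^ (h'+1) • (1 : Matrix (Fin m) (Fin m) ℂ) - A).det := by
  have h1 : (t • (1 : Matrix (Fin (h'+1) × Fin m) (Fin (h'+1) × Fin m) ℂ)
      - liftBlock (h'+1) A).det * (Umat m (h'+1) t).det = (Cmat h' A t).det := by
    rw [← Matrix.det_mul, NU_eq_Cmat]
  rw [Umat_det, mul_one] at h1
  rw [h1, Cmat_det]

theorem liftBlock_charpoly {m h : ℕ} (hm : 1 ≤ m) (hh : 1 ≤ h)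
    (A : Matrix (Fin m) (Fin m) ℂ) :
    (liftBlock h A).charpoly = A.charpoly.comp (X ^ h) := by
  obtain ⟨h', rfl⟩ : ∃ h', h = h' + 1 := ⟨h - 1, by omega⟩
  apply Polynomial.funext
  intro t
  rw [eval_comp, eval_pow, eval_X, eval_charpoly'', eval_charpoly'', det_lift]
end

section
/- Let m ≥ 1 and h ≥ 1 be natural numbers and let A be an m×m complex matrix. Then the spectrum of the block matrix M(A,h) over ℂ is exactly the set of h-th roots of elements of the spectrum of A: spectrum ℂ (M(A,h)) = { μ ∈ ℂ | μ^h ∈ spectrum ℂ A }. -/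
open Matrix

lemma spec_iff {n : Type*} [Fintype n] [DecidableEq n] [Nonempty n]
    (B : Matrix n n ℂ) (μ : ℂ) :
    μ ∈ spectrum ℂ B ↔ ∃ v, v ≠ 0 ∧ B *ᵥ v = μ • v := by
  rw [spectrum.mem_iff, Matrix.isUnit_iff_isUnit_det, isUnit_iff_ne_zero, not_not,
    ← Matrix.exists_mulVec_eq_zero_iff]
  constructor
  · rintro ⟨v, hv, h0⟩
    refine ⟨v, hv, ?_⟩
    rw [Algebra.algebraMap_eq_smul_one, Matrix.sub_mulVec, sub_eq_zero,
      Matrix.smul_mulVec, Matrix.one_mulVec] at h0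
    exact h0.symm
  · rintro ⟨v, hv, h0⟩
    refine ⟨v, hv, ?_⟩
    rw [Algebra.algebraMap_eq_smul_one, Matrix.sub_mulVec, sub_eq_zero,
      Matrix.smul_mulVec, Matrix.one_mulVec, h0]

lemma liftBlock_mulVec {m h : ℕ} (hh : 1 ≤ h) (A : Matrix (Fin m) (Fin m) ℂ)
    (v : Fin h × Fin m → ℂ) (i : Fin h) (k : Fin m) :
    (liftBlock h A *ᵥ v) (i, k) =
      if i.val = 0 then ∑ l, A k l * v (⟨h - 1, by omega⟩, l)
      else v (⟨i.val - 1, by omega⟩, k) := by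
  simp only [mulVec, dotProduct, Fintype.sum_prod_type, liftBlock]
  by_cases hi : i.val = 0
  · simp only [hi, if_true, true_and]
    rw [Finset.sum_eq_single (⟨h - 1, by omega⟩ : Fin h)]
    · apply Finset.sum_congr rfl
      intro l _
      simp
    · intro j _ hj
      have hj' : (j : ℕ) ≠ h - 1 := fun hc => hj (Fin.ext hc)
      have : ¬ ((0:ℕ) = j.val + 1) := by omega
      simp [hj', this]
    · simp
  · simp only [hi, if_false, false_and]
    rw [Finset.sum_eq_single (⟨i.val - 1, by omega⟩ : Fin h)]
    · have : i.val = (i.val - 1) + 1 := by omega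
      rw [Finset.sum_eq_single k]
      · simp [← this]
      · intro l _ hl
        simp [Ne.symm hl]
      · simp
    · intro j _ hj
      have hj' : i.val ≠ j.val + 1 := by
        intro hc
        apply hj
        apply Fin.ext
        simp only [Fin.val_mk]
        omega
      simp [hj']
    · simp

theorem liftBlock_spectrum {m h : ℕ} (hm : 1 ≤ m) (hh : 1 ≤ h)
    (A : Matrix (Fin m) (Fin m) ℂ) :
    spectrum ℂ (liftBlock h A) = {μ : ℂ | μ ^ h ∈ spectrum ℂ A} := by
  have nm : Nonempty (Fin m) := ⟨⟨0, by omega⟩⟩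
  have nhm : Nonempty (Fin h × Fin m) := ⟨(⟨0, by omega⟩, ⟨0, by omega⟩)⟩
  ext μ
  simp only [Set.mem_setOf_eq]
  rw [spec_iff, spec_iff]
  constructor
  · rintro ⟨v, hv, heq⟩
    set w : Fin m → ℂ := fun k => v (⟨h - 1, by omega⟩, k) with hwdef
    have key : ∀ t, t < h → ∀ k, v (⟨h - 1 - t, by omega⟩, k) = μ ^ t * w k := by
      intro t
      induction t with
      | zero =>
        intro _ k
        simp [hwdef]
      | succ t ih =>
        intro ht k
        have ht' : t < h := by omega
        have e := congrFun heq (⟨h - 1 - t, by omega⟩, k)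
        rw [liftBlock_mulVec hh] at e
        simp only [Fin.val_mk, Pi.smul_apply, smul_eq_mul] at e
        rw [if_neg (by omega : ¬ (h - 1 - t = 0))] at e
        have hidx : (⟨h - 1 - t - 1, by omega⟩ : Fin h) = ⟨h - 1 - (t + 1), by omega⟩ := by
          apply Fin.ext; simp only [Fin.val_mk]; omega
        rw [hidx] at e
        rw [e, ih ht' k, pow_succ]
        ring
    have vall : ∀ (i : Fin h) (k : Fin m), v (i, k) = μ ^ (h - 1 - i.val) * w k := by
      intro i k
      have hidx : (⟨h - 1 - (h - 1 - i.val), by omega⟩ : Fin h) = i := by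
        apply Fin.ext; simp only [Fin.val_mk]; omega
      have := key (h - 1 - i.val) (by omega) k
      rwa [hidx] at this
    have hw0 : w ≠ 0 := by
      intro hc
      apply hv
      funext p
      rw [show p = (p.1, p.2) from rfl, vall p.1 p.2, hc]
      simp
    refine ⟨w, hw0, ?_⟩
    funext k
    have e := congrFun heq (⟨0, by omega⟩, k)
    rw [liftBlock_mulVec hh] at e
    simp only [Fin.val_mk, Pi.smul_apply, smul_eq_mul] at e
    rw [if_pos trivial] at e
    have : (A *ᵥ w) k = ∑ l, A k l * v (⟨h - 1, by omega⟩, l) := rfl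
    rw [Pi.smul_apply, smul_eq_mul, this, e, vall]
    simp only [Fin.val_mk, Nat.sub_zero]
    have hp : μ * μ ^ (h - 1) = μ ^ h := by
      rw [← pow_succ']; congr 1; omega
    rw [← hp]; ring
  · rintro ⟨w, hw0, hAw⟩
    refine ⟨fun p => μ ^ (h - 1 - p.1.val) * w p.2, ?_, ?_⟩
    · obtain ⟨k, hk⟩ := Function.ne_iff.mp hw0
      intro hc
      have := congrFun hc (⟨h - 1, by omega⟩, k)
      simp only [Fin.val_mk, Nat.sub_self, pow_zero, one_mul, Pi.zero_apply] at this
      exact hk this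
    · funext p
      obtain ⟨i, k⟩ := p
      rw [liftBlock_mulVec hh]
      simp only [Pi.smul_apply, smul_eq_mul, Fin.val_mk]
      by_cases hi : i.val = 0
      · rw [if_pos hi]
        have : ∑ l, A k l * (μ ^ (h - 1 - (h - 1)) * w l) = (A *ᵥ w) k := by
          simp [mulVec, dotProduct]
        rw [this, hAw, Pi.smul_apply, smul_eq_mul, hi]
        have hp : μ * μ ^ (h - 1) = μ ^ h := by
          rw [← pow_succ']; congr 1; omega
        rw [← hp, Nat.sub_zero]
        ring
      · rw [if_neg hi]
        rw [show h - 1 - (i.val - 1) = (h - 1 - i.val) + 1 by omega, pow_succ]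
        ring
end

section
/- Let m ≥ 1 and h ≥ 1 be natural numbers, A an m×m complex matrix, λ, μ ∈ ℂ with μ^h = λ, and v : Fin m → ℂ a vector with A.mulVec v = λ • v. Define the vector w : Fin h × Fin m → ℂ by w (j,k) = μ^(h−1−j) · v k. Then (M(A,h)).mulVec w = μ • w; in particular, if v ≠ 0 and μ ≠ 0 then μ is an eigenvalue of M(A,h). -/
open Matrix

theorem liftBlock_eigenvector {m h : ℕ} (hm : 1 ≤ m) (hh : 1 ≤ h)
    (A : Matrix (Fin m) (Fin m) ℂ) (lam mu : ℂ) (hmu : mu ^ h = lam)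
    (v : Fin m → ℂ) (hv : A.mulVec v = lam • v) :
    (liftBlock h A).mulVec (fun p => mu ^ (h - 1 - p.1.val) * v p.2)
        = mu • (fun p : Fin h × Fin m => mu ^ (h - 1 - p.1.val) * v p.2) ∧
      (v ≠ 0 → mu ≠ 0 → mu ∈ spectrum ℂ (liftBlock h A)) := by
  have key : (liftBlock h A).mulVec (fun p => mu ^ (h - 1 - p.1.val) * v p.2)
      = mu • (fun p : Fin h × Fin m => mu ^ (h - 1 - p.1.val) * v p.2) := by
    funext p
    obtain ⟨i, k⟩ := p
    simp only [mulVec, dotProduct, Fintype.sum_prod_type, Pi.smul_apply, smul_eq_mul]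
    by_cases hi : i.val = 0
    · have h1 : (Finset.univ.sum fun j : Fin h => Finset.univ.sum fun l : Fin m =>
          liftBlock h A (i, k) (j, l) * (mu ^ (h - 1 - j.val) * v l))
          = Finset.univ.sum fun l : Fin m => A k l * v l := by
        rw [Finset.sum_eq_single (⟨h - 1, by omega⟩ : Fin h)]
        · apply Finset.sum_congr rfl
          intro l _
          simp [liftBlock, hi, Nat.sub_self]
        · intro j _ hj
          apply Finset.sum_eq_zero
          intro l _
          have : j.val ≠ h - 1 := fun hc => hj (Fin.ext hc)
          simp [liftBlock, hi, this]
        · simp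
      rw [h1]
      have h2 : (Finset.univ.sum fun l : Fin m => A k l * v l) = lam * v k := by
        have := congrFun hv k
        simpa [mulVec, dotProduct] using this
      rw [h2, ← hmu, hi]
      have : h = (h - 1) + 1 := by omega
      rw [show h - 1 - 0 = h - 1 from rfl]
      conv_lhs => rw [this, pow_succ']
      ring
    · have h1 : (Finset.univ.sum fun j : Fin h => Finset.univ.sum fun l : Fin m =>
          liftBlock h A (i, k) (j, l) * (mu ^ (h - 1 - j.val) * v l))
          = mu ^ (h - 1 - (i.val - 1)) * v k := by
        rw [Finset.sum_eq_single (⟨i.val - 1, by omega⟩ : Fin h)]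
        · rw [Finset.sum_eq_single k]
          · simp only [liftBlock]
            rw [if_neg (by simp [hi]), if_pos (by omega : (i:ℕ) = i.val - 1 + 1)]
            simp
          · intro l _ hl
            simp only [liftBlock]
            rw [if_neg (by simp [hi]), if_pos (by omega : (i:ℕ) = i.val - 1 + 1)]
            simp [Ne.symm hl]
          · simp
        · intro j _ hj
          apply Finset.sum_eq_zero
          intro l _
          have hne : i.val ≠ j.val + 1 := by
            intro hc
            apply hj
            apply Fin.ext
            simp; omega
          simp [liftBlock, hi, hne]
        · simp
      rw [h1]
      have h3 : h - 1 - (i.val - 1) = (h - 1 - i.val) + 1 := by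
        have := i.isLt; omega
      rw [h3, pow_succ']
      ring
  refine ⟨key, fun hv0 hmu0 => ?_⟩
  rw [spectrum.mem_iff]
  intro hu
  rw [Matrix.isUnit_iff_isUnit_det, isUnit_iff_ne_zero] at hu
  apply hu
  rw [← Matrix.exists_mulVec_eq_zero_iff]
  refine ⟨(fun p => mu ^ (h - 1 - p.1.val) * v p.2), ?_, ?_⟩
  · obtain ⟨k, hk⟩ := Function.ne_iff.mp hv0
    intro hc
    have h0 : mu ^ (h - 1 - (0:ℕ)) * v k = 0 := congrFun hc (⟨0, by omega⟩, k)
    exact (mul_ne_zero (pow_ne_zero _ hmu0) hk) h0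
  · rw [Matrix.sub_mulVec, key]
    simp [Algebra.algebraMap_eq_smul_one, Matrix.smul_mulVec, Matrix.one_mulVec]
end

section
/- Let m ≥ 1 and h ≥ 1 be natural numbers and let A be an m×m complex matrix. Then det(M(A,h)) = (−1)^(m·(h−1)) · det A. -/
open Matrix

theorem liftBlock_det {m h : ℕ} (hm : 1 ≤ m) (hh : 1 ≤ h)
    (A : Matrix (Fin m) (Fin m) ℂ) :
    (liftBlock h A).det = (-1 : ℂ) ^ (m * (h - 1)) * A.det := by
  obtain ⟨n, rfl⟩ : ∃ n, h = n + 1 := ⟨h - 1, (Nat.succ_pred_eq_of_pos hh).symm⟩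
  set D : Matrix (Fin m × Fin (n + 1)) (Fin m × Fin (n + 1)) ℂ :=
    Matrix.blockDiagonal (fun i : Fin (n + 1) => if i = 0 then A else 1) with hD
  set π : Equiv.Perm (Fin m × Fin (n + 1)) :=
    Equiv.prodCongrRight (fun _ : Fin m => finRotate (n + 1)) with hπ
  have key : liftBlock (n + 1) A =
      (D.submatrix id π).submatrix (Equiv.prodComm (Fin (n+1)) (Fin m))
        (Equiv.prodComm (Fin (n+1)) (Fin m)) := by
    ext ⟨i, k⟩ ⟨j, l⟩
    simp only [liftBlock, Matrix.submatrix_apply, Equiv.prodComm_apply, Prod.swap,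
      hπ, Equiv.prodCongrRight_apply, id_eq, hD, Matrix.blockDiagonal_apply]
    by_cases h1 : (i : ℕ) = 0 ∧ (j : ℕ) = n + 1 - 1
    · obtain ⟨hi0, hjn⟩ := h1
      have hi : i = 0 := Fin.ext hi0
      have hj : j = Fin.last n := Fin.ext (by simpa using hjn)
      have hrot : finRotate (n + 1) j = 0 := by
        rw [hj]; simp [finRotate_succ_apply, Fin.last]
        exact Fin.ext (by simp [Fin.add_def])
      simp [hi0, hjn, hi, hrot]
    · rw [if_neg h1]
      push_neg at h1
      by_cases h2 : (i : ℕ) = (j : ℕ) + 1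
      · have hjn : (j : ℕ) < n := by
          rcases Nat.lt_or_ge (j : ℕ) n with h | h
          · exact h
          · exfalso
            have : (j : ℕ) = n := le_antisymm (Nat.lt_succ_iff.mp j.isLt) h
            have hi0 : (i : ℕ) = 0 ∨ True := Or.inr trivial
            have := h1 ?_
            · simp at this; omega
            · -- need (i:ℕ) = 0 to derive contradiction; but i = j+1 = n+1 ≥ 1
              omega
        have hrot : finRotate (n + 1) j = i := by
          apply Fin.ext
          rw [finRotate_succ_apply, Fin.add_def]
          simp [Nat.mod_eq_of_lt (by omega : (j : ℕ) + 1 < n + 1), h2]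
        have hine : i ≠ 0 := by
          intro hi; apply absurd h2; rw [hi]; simp
        rw [if_pos h2, if_pos hrot.symm, if_neg hine]
        simp [Matrix.one_apply, eq_comm]
      · rw [if_neg h2]
        have hrot : i ≠ finRotate (n + 1) j := by
          intro hcontra
          have := congrArg Fin.val hcontra
          rw [finRotate_succ_apply, Fin.add_def] at this
          simp at this
          by_cases hj : (j : ℕ) < n
          · rw [Nat.mod_eq_of_lt (by omega)] at this; exact h2 this
          · have hjn : (j : ℕ) = n := le_antisymm (Nat.lt_succ_iff.mp j.isLt) (by omega)
            rw [hjn] at this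
            simp at this
            exact (h1 (by simp [this])) (by omega)
        rw [if_neg hrot]
  rw [key, Matrix.det_submatrix_equiv_self, Matrix.det_permute', hD, hπ,
    Matrix.det_blockDiagonal]
  have hsign : (Equiv.Perm.sign (Equiv.prodCongrRight
      (fun _ : Fin m => finRotate (n + 1))) : ℂ) = (-1 : ℂ) ^ (m * n) := by
    rw [Equiv.Perm.sign_prodCongrRight]
    simp only [sign_finRotate, Finset.prod_const, Finset.card_univ, Fintype.card_fin]
    push_cast
    rw [← pow_mul, Nat.mul_comm]
  rw [hsign]
  have hn : n + 1 - 1 = n := rfl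
  rw [hn]
  congr 1
  rw [Fintype.prod_eq_single (0 : Fin (n + 1)) (fun i hi => by simp [hi])]
  simp
end

section
/- Let λ ∈ ℂ with λ ≠ 0, let m ≥ 1 and h ≥ 1 be natural numbers, let μ ∈ ℂ satisfy μ^h = λ, and let ζ = exp(2πi/h). Then there exists an invertible (hm)×(hm) complex matrix P such that P⁻¹·M(J(m,λ),h)·P is block diagonal with m×m blocks, the j-th diagonal block (j ∈ Fin h) being the Jordan block J(m, μ·ζ^j); entrywise, (P⁻¹·M(J(m,λ),h)·P) (j,k) (j',l) = J(m, μ·ζ^j) k l if j = j', and = 0 if j ≠ j'. In particular, every h-th root of λ occurs in exactly one Jordan block of M(J(m,λ),h), of size m. -/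
open Matrix Complex

/-- The `m × m` Jordan block with eigenvalue `lam`: `lam` on the diagonal and `1` on the
first superdiagonal. -/
def jordanBlock (m : ℕ) (lam : ℂ) : Matrix (Fin m) (Fin m) ℂ :=
  fun i j => if i = j then lam else if j.val = i.val + 1 then 1 else 0

namespace LiftAux

open PowerSeries Finset

/-- Upper-triangular Toeplitz matrix built from the first `m` coefficients of a power series. -/
noncomputable def toepl (m : ℕ) (f : PowerSeries ℂ) : Matrix (Fin m) (Fin m) ℂ :=
  Matrix.of fun k l => if k.val ≤ l.val then PowerSeries.coeff (l.val - k.val) f else 0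

lemma toepl_one (m : ℕ) : toepl m 1 = 1 := by
  ext k l
  simp only [toepl, Matrix.of_apply, Matrix.one_apply, PowerSeries.coeff_one, Fin.ext_iff]
  split_ifs <;> first | rfl | omega

lemma toepl_smul (m : ℕ) (c : ℂ) (f : PowerSeries ℂ) : toepl m (c • f) = c • toepl m f := by
  ext k l
  simp only [toepl, Matrix.of_apply, Matrix.smul_apply, _root_.map_smul, smul_eq_mul]
  split_ifs <;> simp

lemma toepl_sub (m : ℕ) (f g : PowerSeries ℂ) : toepl m (f - g) = toepl m f - toepl m g := by
  ext k l
  simp only [toepl, Matrix.of_apply, Matrix.sub_apply, map_sub]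
  split_ifs <;> simp

lemma toepl_C (m : ℕ) (c : ℂ) : toepl m (PowerSeries.C c) = c • 1 := by
  ext k l
  simp only [toepl, Matrix.of_apply, Matrix.smul_apply, Matrix.one_apply, PowerSeries.coeff_C,
    smul_eq_mul, Fin.ext_iff]
  split_ifs <;> first | (exfalso; omega) | simp

lemma toepl_mul (m : ℕ) (f g : PowerSeries ℂ) :
    toepl m (f * g) = toepl m f * toepl m g := by
  ext k l
  rw [Matrix.mul_apply]
  simp only [toepl, Matrix.of_apply]
  by_cases hkl : k.val ≤ l.val
  · rw [if_pos hkl, PowerSeries.coeff_mul, Finset.Nat.sum_antidiagonal_eq_sum_range_succ_mk]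
    rw [Fin.sum_univ_eq_sum_range (fun j =>
      (if k.val ≤ j then PowerSeries.coeff (j - k.val) f else 0) *
      (if j ≤ l.val then PowerSeries.coeff (l.val - j) g else 0)) m]
    rw [show Finset.range m = Finset.range m by rfl]
    have h1 : ∑ j ∈ Finset.range m,
        ((if k.val ≤ j then PowerSeries.coeff (j - k.val) f else 0) *
         (if j ≤ l.val then PowerSeries.coeff (l.val - j) g else 0))
        = ∑ j ∈ Finset.Ico k.val (l.val + 1),
        ((if k.val ≤ j then PowerSeries.coeff (j - k.val) f else 0) *
         (if j ≤ l.val then PowerSeries.coeff (l.val - j) g else 0)) := by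
      refine (Finset.sum_subset ?_ ?_).symm
      · intro x hx
        simp only [Finset.mem_Ico] at hx
        simp only [Finset.mem_range]
        omega
      · intro x hx hnx
        simp only [Finset.mem_Ico] at hnx
        split_ifs <;> first | omega | simp
    rw [h1, Finset.sum_Ico_eq_sum_range,
      show l.val + 1 - k.val = (l.val - k.val) + 1 by omega]
    refine Finset.sum_congr rfl ?_
    intro d hd
    simp only [Finset.mem_range] at hd
    have e1 : k.val ≤ k.val + d := Nat.le_add_right _ _
    have e2 : k.val + d ≤ l.val := by omega
    rw [if_pos e1, if_pos e2, show k.val + d - k.val = d by omega,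
      show l.val - (k.val + d) = l.val - k.val - d by omega]
  · rw [if_neg hkl]
    refine (Finset.sum_eq_zero ?_).symm
    intro j _
    split_ifs <;> first | omega | simp

lemma toepl_pow (m : ℕ) (f : PowerSeries ℂ) (n : ℕ) : toepl m (f ^ n) = toepl m f ^ n := by
  induction n with
  | zero => simpa using toepl_one m
  | succ n ih => rw [pow_succ, pow_succ, toepl_mul, ih]

lemma toepl_eq_zero (m : ℕ) (f : PowerSeries ℂ) (hf : ∀ r < m, PowerSeries.coeff r f = 0) :
    toepl m f = 0 := by
  ext k l
  simp only [toepl, Matrix.of_apply, Matrix.zero_apply]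
  split_ifs with hc
  · exact hf _ (by omega)
  · rfl


/-- The binomial series `(1 + lam⁻¹ X)^α`. -/
noncomputable def Fser (lam α : ℂ) : PowerSeries ℂ :=
  PowerSeries.mk fun k => Ring.choose α k * lam⁻¹ ^ k

lemma Fser_mul (lam α β : ℂ) : Fser lam α * Fser lam β = Fser lam (α + β) := by
  ext n
  rw [PowerSeries.coeff_mul]
  simp only [Fser, PowerSeries.coeff_mk]
  rw [Ring.add_choose_eq n (Commute.all α β), Finset.sum_mul]
  refine Finset.sum_congr rfl ?_
  rintro ⟨i, j⟩ hij
  rw [Finset.HasAntidiagonal.mem_antidiagonal] at hij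
  simp only [PowerSeries.coeff_mk]
  rw [← hij, pow_add]
  ring

lemma Fser_zero (lam : ℂ) : Fser lam 0 = 1 := by
  ext n
  simp only [Fser, PowerSeries.coeff_mk, PowerSeries.coeff_one]
  cases n with
  | zero => simp [Ring.choose_zero_right]
  | succ n => simp [Ring.choose_zero_succ]

lemma Fser_pow (lam α : ℂ) (t : ℕ) : Fser lam α ^ t = Fser lam (t * α) := by
  induction t with
  | zero => simp [Fser_zero]
  | succ t ih =>
    rw [pow_succ, ih, Fser_mul]
    push_cast
    ring_nf

lemma constantCoeff_Fser (lam α : ℂ) : PowerSeries.constantCoeff (Fser lam α) = 1 := by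
  rw [← PowerSeries.coeff_zero_eq_constantCoeff]
  simp [Fser, Ring.choose_zero_right]

lemma coeff_one_Fser (lam α : ℂ) : PowerSeries.coeff 1 (Fser lam α) = α * lam⁻¹ := by
  simp [Fser, Ring.choose_one_right]

lemma coeff_Fser_one (lam : ℂ) (n : ℕ) :
    PowerSeries.coeff n (Fser lam 1) = (Nat.choose 1 n : ℂ) * lam⁻¹ ^ n := by
  simp only [Fser, PowerSeries.coeff_mk]
  rw [show (1 : ℂ) = ((1 : ℕ) : ℂ) by norm_num, Ring.choose_natCast]

lemma jordan_eq_toepl (m : ℕ) (lam : ℂ) (hlam : lam ≠ 0) :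
    toepl m (lam • Fser lam 1) = jordanBlock m lam := by
  ext k l
  simp only [toepl, Matrix.of_apply, jordanBlock, _root_.map_smul, smul_eq_mul, coeff_Fser_one,
    Fin.ext_iff]
  by_cases e1 : (k : ℕ) = l
  · rw [if_pos (by omega), if_pos e1, show l.val - k.val = 0 by omega]
    simp
  · rw [if_neg e1]
    by_cases e2 : (l : ℕ) = k + 1
    · rw [if_pos (by omega), if_pos e2, show l.val - k.val = 1 by omega]
      simp [Nat.choose]
      field_simp
    · rw [if_neg e2]
      split_ifs with h
      · rw [show Nat.choose 1 (l.val - k.val) = 0 from Nat.choose_eq_zero_of_lt (by omega)]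
        simp
      · rfl

lemma coeff_pow_lt (f : PowerSeries ℂ) (h0 : PowerSeries.constantCoeff f = 0)
    {n r : ℕ} (h : n < r) : PowerSeries.coeff n (f ^ r) = 0 := by
  obtain ⟨q, rfl⟩ := PowerSeries.X_dvd_iff.mpr h0
  rw [mul_pow, PowerSeries.coeff_X_pow_mul', if_neg (by omega)]

lemma coeff_pow_self (f : PowerSeries ℂ) (h0 : PowerSeries.constantCoeff f = 0) (r : ℕ) :
    PowerSeries.coeff r (f ^ r) = PowerSeries.coeff 1 f ^ r := by
  obtain ⟨q, rfl⟩ := PowerSeries.X_dvd_iff.mpr h0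
  rw [mul_pow, PowerSeries.coeff_X_pow_mul', if_pos le_rfl, Nat.sub_self,
    PowerSeries.coeff_zero_eq_constantCoeff, map_pow]
  congr 1
  simpa using ((PowerSeries.coeff_X_pow_mul q 1 0).symm : _)

/-- The matrix of the Jordan chain associated with a nilpotent Toeplitz matrix `toepl f`. -/
noncomputable def chainS (m : ℕ) (f : PowerSeries ℂ) : Matrix (Fin (m+1)) (Fin (m+1)) ℂ :=
  Matrix.of fun l k => PowerSeries.coeff (m - l.val) (f ^ (m - k.val))


lemma chainS_col (m : ℕ) (f : PowerSeries ℂ) (l k : Fin (m+1)) :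
    chainS m f l k = toepl (m+1) (f ^ (m - k.val)) l (Fin.last m) := by
  simp only [chainS, toepl, Matrix.of_apply, Fin.val_last, if_pos (Nat.lt_succ_iff.mp l.isLt)]

/-- The key chain relation: `(μ'•1 + toepl f) * chainS f = chainS f * J(μ')`. -/
lemma chain_relation (m : ℕ) (f : PowerSeries ℂ) (h0 : PowerSeries.constantCoeff f = 0)
    (mu' : ℂ) :
    (mu' • 1 + toepl (m+1) f) * chainS m f = chainS m f * jordanBlock (m+1) mu' := by
  ext l k
  rw [Matrix.mul_apply, Matrix.mul_apply]
  have hL : ∀ j, (mu' • 1 + toepl (m+1) f) l j * chainS m f j k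
      = mu' * ((1 : Matrix (Fin (m+1)) (Fin (m+1)) ℂ) l j * chainS m f j k)
        + toepl (m+1) f l j * chainS m f j k := by
    intro j
    simp only [Matrix.add_apply, Matrix.smul_apply, smul_eq_mul]
    ring
  rw [Finset.sum_congr rfl fun j _ => hL j, Finset.sum_add_distrib, ← Finset.mul_sum]
  have h1 : ∑ j, (1 : Matrix (Fin (m+1)) (Fin (m+1)) ℂ) l j * chainS m f j k
      = chainS m f l k := by
    rw [← Matrix.mul_apply, Matrix.one_mul]
  have h2 : ∑ j, toepl (m+1) f l j * chainS m f j k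
      = PowerSeries.coeff (m - l.val) (f ^ (m - k.val + 1)) := by
    calc ∑ j, toepl (m+1) f l j * chainS m f j k
        = ∑ j, toepl (m+1) f l j * toepl (m+1) (f ^ (m - k.val)) j (Fin.last m) := by
          exact Finset.sum_congr rfl fun j _ => by rw [chainS_col]
      _ = (toepl (m+1) f * toepl (m+1) (f ^ (m - k.val))) l (Fin.last m) := by
          rw [Matrix.mul_apply]
      _ = toepl (m+1) (f ^ (m - k.val + 1)) l (Fin.last m) := by
          rw [← toepl_mul, ← pow_succ']
      _ = PowerSeries.coeff (m - l.val) (f ^ (m - k.val + 1)) := by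
          simp only [toepl, Matrix.of_apply, Fin.val_last,
            if_pos (Nat.lt_succ_iff.mp l.isLt)]
  rw [h1, h2]
  -- Now the right-hand side
  have hR : ∀ j : Fin (m+1), chainS m f l j * jordanBlock (m+1) mu' j k
      = mu' * (if j = k then chainS m f l j else 0)
        + (if k.val = j.val + 1 then chainS m f l j else 0) := by
    intro j
    simp only [jordanBlock]
    split_ifs with e1 e2 e2
    · omega
    · subst e1; ring
    · ring
    · ring
  rw [Finset.sum_congr rfl fun j _ => hR j, Finset.sum_add_distrib, ← Finset.mul_sum,
    Finset.sum_ite_eq' Finset.univ k (fun j => chainS m f l j), if_pos (Finset.mem_univ k)]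
  by_cases hk : k.val = 0
  · have hz : ∑ j, (if k.val = j.val + 1 then chainS m f l j else 0) = 0 :=
      Finset.sum_eq_zero fun j _ => by rw [if_neg (by omega)]
    rw [hz, show m - k.val + 1 = m + 1 by omega, coeff_pow_lt f h0 (by omega)]
  · have hz : ∑ j, (if k.val = j.val + 1 then chainS m f l j else 0)
        = chainS m f l ⟨k.val - 1, by omega⟩ := by
      rw [Finset.sum_eq_single (⟨k.val - 1, by omega⟩ : Fin (m+1))]
      · rw [if_pos (by simp; omega)]
      · intro j _ hj
        refine if_neg fun hc => hj (Fin.ext ?_)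
        show j.val = k.val - 1
        omega
      · intro hmem; exact absurd (Finset.mem_univ _) hmem
    rw [hz]
    have : m - (⟨k.val - 1, by omega⟩ : Fin (m+1)).val = m - k.val + 1 := by simp; omega
    simp only [chainS, Matrix.of_apply, this]

lemma chainS_isUnit (m : ℕ) (f : PowerSeries ℂ) (h0 : PowerSeries.constantCoeff f = 0)
    (h1 : PowerSeries.coeff 1 f ≠ 0) : IsUnit (chainS m f) := by
  rw [Matrix.isUnit_iff_isUnit_det]
  have htri : (chainS m f).BlockTriangular id := by
    intro l k hlk
    simp only [id] at hlk
    simp only [chainS, Matrix.of_apply]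
    exact coeff_pow_lt f h0 (by
      have h1 := l.isLt; have h2 := Fin.lt_iff_val_lt_val.mp hlk; omega)
  rw [Matrix.det_of_upperTriangular htri]
  rw [isUnit_iff_ne_zero, Finset.prod_ne_zero_iff]
  intro k _
  simp only [chainS, Matrix.of_apply]
  rw [coeff_pow_self f h0]
  exact pow_ne_zero _ h1

lemma toepl_isUnit (m : ℕ) (f : PowerSeries ℂ) (h0 : PowerSeries.constantCoeff f ≠ 0) :
    IsUnit (toepl m f) := by
  rw [Matrix.isUnit_iff_isUnit_det]
  have htri : (toepl m f).BlockTriangular id := by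
    intro l k hlk
    simp only [id] at hlk
    simp only [toepl, Matrix.of_apply]
    rw [if_neg (by exact fun hc => absurd hlk (by simp; omega))]
  rw [Matrix.det_of_upperTriangular htri]
  rw [isUnit_iff_ne_zero, Finset.prod_ne_zero_iff]
  intro k _
  simpa [toepl, PowerSeries.coeff_zero_eq_constantCoeff] using h0


/-- Build an `(h*m) × (h*m)` matrix from an `h × h` array of `m × m` blocks. -/
def blk {m h : ℕ} (Φ : Fin h → Fin h → Matrix (Fin m) (Fin m) ℂ) :
    Matrix (Fin h × Fin m) (Fin h × Fin m) ℂ :=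
  Matrix.of fun p q => Φ p.1 q.1 p.2 q.2

lemma blk_mul {m h : ℕ} (Φ Ψ : Fin h → Fin h → Matrix (Fin m) (Fin m) ℂ) :
    blk Φ * blk Ψ = blk fun i j => ∑ k, Φ i k * Ψ k j := by
  ext p q
  simp only [blk, Matrix.mul_apply, Matrix.of_apply, Fintype.sum_prod_type,
    Finset.sum_apply, Matrix.sum_apply]

lemma blk_one {m h : ℕ} :
    (1 : Matrix (Fin h × Fin m) (Fin h × Fin m) ℂ)
      = blk fun i j => if i = j then 1 else 0 := by
  ext p q
  simp only [blk, Matrix.one_apply, Matrix.of_apply, Prod.ext_iff]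
  split_ifs with h1 h2 h3 <;>
    simp_all [Matrix.one_apply, Matrix.zero_apply]

lemma blk_diag_isUnit {m h : ℕ} (S : Fin h → Matrix (Fin m) (Fin m) ℂ)
    (hS : ∀ j, IsUnit (S j)) :
    IsUnit (blk fun i j => if i = j then S i else 0) := by
  have heq : (blk fun i j => if i = j then S i else 0)
      = (Matrix.blockDiagonal S).submatrix (Equiv.prodComm (Fin h) (Fin m))
          (Equiv.prodComm (Fin h) (Fin m)) := by
    ext p q
    simp only [blk, Matrix.of_apply, Matrix.submatrix_apply, Equiv.prodComm_apply,
      Matrix.blockDiagonal_apply, Prod.fst_swap, Prod.snd_swap]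
    split_ifs <;> simp
  rw [heq, Matrix.isUnit_iff_isUnit_det, Matrix.det_submatrix_equiv_self,
    Matrix.det_blockDiagonal, isUnit_iff_ne_zero, Finset.prod_ne_zero_iff]
  intro j _
  have := (Matrix.isUnit_iff_isUnit_det _).mp (hS j)
  rw [isUnit_iff_ne_zero] at this
  exact this

lemma root_sum {h' : ℕ} {ζ : ℂ} (hζ : IsPrimitiveRoot ζ (h'+1)) (d : ℕ) :
    ∑ k ∈ Finset.range (h'+1), (ζ ^ d) ^ k
      = if (h'+1) ∣ d then ((h'+1 : ℕ) : ℂ) else 0 := by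
  by_cases hd : ζ ^ d = 1
  · rw [if_pos ((hζ.pow_eq_one_iff_dvd d).mp hd)]
    simp [hd]
  · rw [if_neg fun hdvd => hd ((hζ.pow_eq_one_iff_dvd d).mpr hdvd)]
    rw [geom_sum_eq hd]
    have : (ζ ^ d) ^ (h' + 1) = 1 := by
      rw [← pow_mul, mul_comm, pow_mul, hζ.pow_eq_one, one_pow]
    rw [this, sub_self, zero_div]

lemma dvd_window {h' i j : ℕ} (hi : i ≤ h') (hj : j ≤ h')
    (hdvd : (h'+1) ∣ (h' - i + (j + 1))) : i = j := by
  have hd1 : 1 ≤ h' - i + j + 1 := by omega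
  have hd2 : h' - i + j + 1 < 2 * (h' + 1) := by omega
  obtain ⟨c, hc⟩ := hdvd
  rcases c with _ | _ | c
  · omega
  · omega
  · exfalso
    have : (h' + 1) * (c + 1 + 1) = (h'+1) * c + (h'+1) + (h'+1) := by ring
    omega


lemma liftBlock_eq_blk {m h : ℕ} (A : Matrix (Fin m) (Fin m) ℂ) :
    liftBlock h A = blk fun i j =>
      if (i : ℕ) = 0 ∧ (j : ℕ) = h - 1 then A
      else if (i : ℕ) = (j : ℕ) + 1 then 1 else 0 := by
  ext p q
  simp only [liftBlock, blk, Matrix.of_apply]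
  split_ifs <;> simp_all [Matrix.one_apply]

lemma main_aux (m h' : ℕ) (lam mu ζ : ℂ) (hlam : lam ≠ 0) (hmu : mu ^ (h'+1) = lam)
    (hζ : IsPrimitiveRoot ζ (h'+1)) :
    ∃ P : Matrix (Fin (h'+1) × Fin (m+1)) (Fin (h'+1) × Fin (m+1)) ℂ, IsUnit P ∧
      liftBlock (h'+1) (jordanBlock (m+1) lam) * P
        = P * blk (fun i j => if i = j then jordanBlock (m+1) (mu * ζ ^ (i : ℕ)) else 0) := by
  have hH : (h' + 1) ≠ 0 := Nat.succ_ne_zero h'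
  have hH0 : ((h'+1 : ℕ) : ℂ) ≠ 0 := Nat.cast_ne_zero.mpr hH
  have hmu0 : mu ≠ 0 := fun hc => hlam (by rw [← hmu, hc, zero_pow hH])
  have hζ0 : ζ ≠ 0 := hζ.ne_zero hH
  -- the series whose Toeplitz matrix is an (h'+1)-st root of the Jordan block
  set Bs : PowerSeries ℂ := mu • Fser lam (((h'+1 : ℕ) : ℂ))⁻¹ with hBs
  set gs : PowerSeries ℂ := Bs - PowerSeries.C mu with hgs
  have hsmul0 : ∀ (c : ℂ) (f : PowerSeries ℂ),
      PowerSeries.constantCoeff (c • f) = c * PowerSeries.constantCoeff f := by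
    intro c f
    rw [← PowerSeries.coeff_zero_eq_constantCoeff, _root_.map_smul, smul_eq_mul]
  have hg0 : PowerSeries.constantCoeff gs = 0 := by
    rw [hgs, map_sub, hBs, hsmul0, constantCoeff_Fser, PowerSeries.constantCoeff_C,
      mul_one, sub_self]
  have hg1 : PowerSeries.coeff 1 gs = mu * (((h'+1 : ℕ) : ℂ))⁻¹ * lam⁻¹ := by
    rw [hgs, map_sub, hBs, _root_.map_smul, coeff_one_Fser, PowerSeries.coeff_C,
      if_neg one_ne_zero, sub_zero, smul_eq_mul, mul_assoc]
  have hg1' : PowerSeries.coeff 1 gs ≠ 0 := by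
    rw [hg1]
    exact mul_ne_zero (mul_ne_zero hmu0 (inv_ne_zero hH0)) (inv_ne_zero hlam)
  have hBsnz : PowerSeries.constantCoeff Bs = mu := by
    rw [hBs, hsmul0, constantCoeff_Fser, mul_one]
  have hBpow : Bs ^ (h'+1) = lam • Fser lam 1 := by
    rw [hBs, smul_pow, Fser_pow, hmu, mul_inv_cancel₀ hH0]
  -- the matrices
  set B : Matrix (Fin (m+1)) (Fin (m+1)) ℂ := toepl (m+1) Bs with hB
  have hBpowM : B ^ (h'+1) = jordanBlock (m+1) lam := by
    rw [hB, ← toepl_pow, hBpow, jordan_eq_toepl _ _ hlam]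
  have hBunit : IsUnit B := toepl_isUnit _ _ (by rw [hBsnz]; exact hmu0)
  set Xf : Fin (h'+1) → Matrix (Fin (m+1)) (Fin (m+1)) ℂ :=
    fun j => (ζ ^ (j : ℕ)) • B with hXf
  set S : Fin (h'+1) → Matrix (Fin (m+1)) (Fin (m+1)) ℂ :=
    fun j => chainS m ((ζ ^ (j : ℕ)) • gs) with hSdef
  have h0j : ∀ j : Fin (h'+1), PowerSeries.constantCoeff ((ζ ^ (j : ℕ)) • gs) = 0 := by
    intro j; rw [hsmul0, hg0, mul_zero]
  have hXS : ∀ j : Fin (h'+1),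
      Xf j * S j = S j * jordanBlock (m+1) (mu * ζ ^ (j : ℕ)) := by
    intro j
    have he : (mu * ζ ^ (j : ℕ)) • (1 : Matrix (Fin (m+1)) (Fin (m+1)) ℂ)
        + toepl (m+1) ((ζ ^ (j : ℕ)) • gs) = Xf j := by
      rw [toepl_smul, hgs, toepl_sub, toepl_C, ← hB, smul_sub, smul_smul,
        mul_comm (ζ ^ (j : ℕ)) mu]
      abel
    rw [hXf]
    calc (ζ ^ (j : ℕ)) • B * S j
        = ((mu * ζ ^ (j : ℕ)) • 1 + toepl (m+1) ((ζ ^ (j : ℕ)) • gs)) * S j := by rw [he, hXf]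
      _ = S j * jordanBlock (m+1) (mu * ζ ^ (j : ℕ)) :=
          chain_relation m _ (h0j j) _
  have hXpow : ∀ j : Fin (h'+1), Xf j ^ (h'+1) = jordanBlock (m+1) lam := by
    intro j
    rw [hXf, smul_pow, pow_right_comm, hζ.pow_eq_one, one_pow, one_smul, hBpowM]
  have hSunit : ∀ j, IsUnit (S j) := by
    intro j
    refine chainS_isUnit _ _ (h0j j) ?_
    rw [_root_.map_smul, smul_eq_mul]
    exact mul_ne_zero (pow_ne_zero _ hζ0) hg1'
  -- the conjugating matrix
  refine ⟨blk fun i j => Xf j ^ (h' - (i : ℕ)) * S j, ?_, ?_⟩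
  · -- invertibility via the decomposition P = Dg * (Z * SS)
    have hZSS : blk (fun i j : Fin (h'+1) =>
          (ζ ^ ((j : ℕ) * (h' - (i : ℕ)))) • (1 : Matrix (Fin (m+1)) (Fin (m+1)) ℂ))
        * blk (fun i j => if i = j then S i else 0)
        = blk fun i j => (ζ ^ ((j : ℕ) * (h' - (i : ℕ)))) • S j := by
      rw [blk_mul]
      refine congrArg blk ?_
      funext i j
      rw [Finset.sum_congr rfl (fun k _ => by rw [mul_ite, mul_zero]),
        Finset.sum_ite_eq' Finset.univ j _, if_pos (Finset.mem_univ j),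
        smul_mul_assoc, Matrix.one_mul]
    have hPdec : blk (fun i j => Xf j ^ (h' - (i : ℕ)) * S j)
        = blk (fun i j : Fin (h'+1) =>
            if i = j then B ^ (h' - (i : ℕ)) else 0)
          * (blk (fun i j : Fin (h'+1) =>
              (ζ ^ ((j : ℕ) * (h' - (i : ℕ)))) • (1 : Matrix (Fin (m+1)) (Fin (m+1)) ℂ))
            * blk (fun i j => if i = j then S i else 0)) := by
      rw [hZSS, blk_mul]
      refine congrArg blk ?_
      funext i j
      rw [Finset.sum_congr rfl (fun k _ => by rw [ite_mul, zero_mul]),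
        Finset.sum_ite_eq Finset.univ i _, if_pos (Finset.mem_univ i),
        mul_smul_comm, hXf, smul_pow, ← pow_mul, smul_mul_assoc, mul_comm (j:ℕ) (h' - (i:ℕ))]
    have hZZ' : blk (fun i j : Fin (h'+1) =>
          (ζ ^ ((j : ℕ) * (h' - (i : ℕ)))) • (1 : Matrix (Fin (m+1)) (Fin (m+1)) ℂ))
        * blk (fun i j : Fin (h'+1) =>
          ((((h'+1 : ℕ) : ℂ))⁻¹ * ζ ^ ((i : ℕ) * ((j : ℕ) + 1))) • (1 : Matrix (Fin (m+1)) (Fin (m+1)) ℂ))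
        = 1 := by
      rw [blk_mul, blk_one]
      refine congrArg blk ?_
      funext i j
      have hterm : ∀ k : Fin (h'+1),
          ((ζ ^ ((k : ℕ) * (h' - (i : ℕ)))) • (1 : Matrix (Fin (m+1)) (Fin (m+1)) ℂ))
            * (((((h'+1 : ℕ) : ℂ))⁻¹ * ζ ^ ((k : ℕ) * ((j : ℕ) + 1))) • 1)
          = ((((h'+1 : ℕ) : ℂ))⁻¹ * (ζ ^ ((h' - (i : ℕ)) + ((j : ℕ) + 1))) ^ (k : ℕ)) • 1 := by
        intro k
        rw [smul_mul_smul_comm, Matrix.one_mul]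
        congr 1
        rw [← pow_mul]
        ring
      rw [Finset.sum_congr rfl fun k _ => hterm k, ← Finset.sum_smul, ← Finset.mul_sum,
        Fin.sum_univ_eq_sum_range (fun k => (ζ ^ ((h' - (i:ℕ)) + ((j:ℕ) + 1))) ^ k) (h'+1),
        root_sum hζ]
      by_cases hij : i = j
      · have hij' : (i : ℕ) = (j : ℕ) := congrArg Fin.val hij
        rw [if_pos ⟨1, by have h1 := Nat.lt_succ_iff.mp i.isLt; omega⟩,
          inv_mul_cancel₀ hH0, one_smul, if_pos hij]
      · rw [if_neg (fun hdvd => hij (Fin.ext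
            (dvd_window (Nat.lt_succ_iff.mp i.isLt) (Nat.lt_succ_iff.mp j.isLt)
              hdvd))),
          mul_zero, zero_smul, if_neg hij]
    have hZunit : IsUnit (blk (fun i j : Fin (h'+1) =>
        (ζ ^ ((j : ℕ) * (h' - (i : ℕ)))) • (1 : Matrix (Fin (m+1)) (Fin (m+1)) ℂ))) := by
      rw [Matrix.isUnit_iff_isUnit_det]
      exact IsUnit.of_mul_eq_one _ (by rw [← Matrix.det_mul, hZZ', Matrix.det_one])
    rw [hPdec]
    exact ((blk_diag_isUnit _ fun i => hBunit.pow _).mul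
      (hZunit.mul (blk_diag_isUnit _ hSunit)))
  · -- the conjugation identity
    rw [liftBlock_eq_blk, blk_mul, blk_mul]
    refine congrArg blk ?_
    funext i j
    have hRHS : (∑ k, (Xf k ^ (h' - (i : ℕ)) * S k) *
          (if k = j then jordanBlock (m+1) (mu * ζ ^ (k : ℕ)) else 0))
        = Xf j ^ (h' - (i : ℕ) + 1) * S j := by
      rw [Finset.sum_congr rfl (fun k _ => by rw [mul_ite, mul_zero]),
        Finset.sum_ite_eq' Finset.univ j _, if_pos (Finset.mem_univ j),
        mul_assoc, ← hXS j, ← mul_assoc, ← pow_succ]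
    rw [hRHS]
    by_cases hi : (i : ℕ) = 0
    · rw [Finset.sum_eq_single (Fin.last h')]
      · rw [if_pos ⟨hi, by simp⟩, show h' - (Fin.last h').val = 0 by simp, pow_zero,
          Matrix.one_mul, hi, ← hXpow j]
        rfl
      · intro k _ hk
        rw [if_neg, if_neg (by omega), Matrix.zero_mul]
        rintro ⟨-, hc⟩
        exact hk (Fin.ext (by simpa using hc))
      · intro hmem; exact absurd (Finset.mem_univ _) hmem
    · rw [Finset.sum_eq_single (⟨(i : ℕ) - 1, by omega⟩ : Fin (h'+1))]
      · rw [if_neg (by rintro ⟨hc, -⟩; exact hi hc), if_pos (by simp; omega), Matrix.one_mul,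
          show h' - ((⟨(i : ℕ) - 1, by omega⟩ : Fin (h'+1)) : ℕ) = h' - (i : ℕ) + 1 by
            simp; have := Nat.lt_succ_iff.mp i.isLt; omega]
      · intro k _ hk
        rw [if_neg (by rintro ⟨hc, -⟩; exact hi hc), if_neg, Matrix.zero_mul]
        intro hc
        exact hk (Fin.ext (by simp; omega))
      · intro hmem; exact absurd (Finset.mem_univ _) hmem


end LiftAux

theorem liftBlock_jordan_decomposition {m h : ℕ} (hm : 1 ≤ m) (hh : 1 ≤ h)
    (lam mu : ℂ) (hlam : lam ≠ 0) (hmu : mu ^ h = lam) :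
    ∃ P : Matrix (Fin h × Fin m) (Fin h × Fin m) ℂ, IsUnit P ∧
      ∀ p q : Fin h × Fin m,
        (P⁻¹ * liftBlock h (jordanBlock m lam) * P) p q =
          if p.1 = q.1 then
            jordanBlock m (mu * Complex.exp (2 * Real.pi * Complex.I / h) ^ p.1.val) p.2 q.2
          else 0 := by
  obtain ⟨m', rfl⟩ : ∃ m', m = m' + 1 := ⟨m - 1, by omega⟩
  obtain ⟨h', rfl⟩ : ∃ h', h = h' + 1 := ⟨h - 1, by omega⟩
  have hζ : IsPrimitiveRoot (Complex.exp (2 * Real.pi * Complex.I / ((h' + 1 : ℕ) : ℂ))) (h' + 1) :=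
    Complex.isPrimitiveRoot_exp _ (Nat.succ_ne_zero h')
  obtain ⟨P, hP, hMP⟩ := LiftAux.main_aux m' h' lam mu _ hlam hmu hζ
  refine ⟨P, hP, fun p q => ?_⟩
  have hPdet := (Matrix.isUnit_iff_isUnit_det P).mp hP
  have hconj : P⁻¹ * liftBlock (h' + 1) (jordanBlock (m' + 1) lam) * P
      = LiftAux.blk (fun i j => if i = j then
          jordanBlock (m' + 1)
            (mu * Complex.exp (2 * Real.pi * Complex.I / ((h' + 1 : ℕ) : ℂ)) ^ (i : ℕ))
          else 0) := by
    rw [mul_assoc, hMP, ← mul_assoc, Matrix.nonsing_inv_mul _ hPdet, one_mul]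
  rw [hconj]
  simp only [LiftAux.blk, Matrix.of_apply]
  split_ifs with hpq
  · rfl
  · rfl
end
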